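/- For all indices k, r, i, j and every point (x,v): Ř^k_{rij}(x, L(x,v)) = R^k_{rij}(x,v) + Σ_{q,s} (∇_i L_q) g^{sq} D^k_{jrs} − Σ_{q,s} (∇_j L_q) g^{sq} D^k_{irs}, where D^k_{jrs} = −∂Γ^k_{rj}/∂v^s and D^k_{irs} = −∂Γ^k_{ri}/∂v^s in accordance with the definition D^k_{rij} = −∂Γ^k_{ir}/∂v^j. -/

import Mathlib

/- Coordinate formalization of extended tensor fields in v- and p-representation
   for a generalized Legendre transformation λ(x,v) = (x, L(x,v)). -/

noncomputable section

open scoped BigOperators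

/-- A point of the (co)tangent bundle in a single chart: a pair (x, v) or (x, p). -/
abbrev Pt (n : ℕ) := (Fin n → ℝ) × (Fin n → ℝ)

/-- An indexed family of scalar functions (components of a (co)vector field). -/
abbrev Fam (n : ℕ) := Fin n → Pt n → ℝ

/-- Components Γ^k_{ij} of an extended connection (or of a gauge tensor T^k_{ij}). -/
abbrev Conn (n : ℕ) := Fin n → Fin n → Fin n → Pt n → ℝ

variable {n : ℕ}

/-- Kronecker delta δ^i_j. -/
def kron (i j : Fin n) : ℝ := if i = j then 1 else 0

/-- Partial derivative ∂f/∂x^m (first slot). -/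
def pdx (m : Fin n) (f : Pt n → ℝ) (q : Pt n) : ℝ :=
  fderiv ℝ f q (Pi.single m 1, 0)

/-- Partial derivative ∂f/∂v^m (resp. ∂f/∂p_m): second slot. -/
def pdv (m : Fin n) (f : Pt n → ℝ) (q : Pt n) : ℝ :=
  fderiv ℝ f q (0, Pi.single m 1)

/-- The generalized Legendre transformation λ(x,v) = (x, L(x,v)). -/
def lam (L : Fam n) (q : Pt n) : Pt n := (q.1, fun i => L i q)

/-- The inverse map λ⁻¹(x,p) = (x, V(x,p)). -/
def lamInv (V : Fam n) (q : Pt n) : Pt n := (q.1, fun i => V i q)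

/-- g_{rk} = ∂L_r/∂v^k. -/
def gdn (L : Fam n) (r k : Fin n) (q : Pt n) : ℝ := pdv k (L r) q

/-- L^i = Σ_q L_q g^{qi}. -/
def Lup (L : Fam n) (ginv : Fin n → Fin n → Pt n → ℝ) (i : Fin n) (q : Pt n) : ℝ :=
  ∑ j, L j q * ginv j i q

/-- |L|² = Σ_s L_s L^s. -/
def L2 (L : Fam n) (ginv : Fin n → Fin n → Pt n → ℝ) (q : Pt n) : ℝ :=
  ∑ s, L s q * Lup L ginv s q

/-- p-representation: W^i = Σ_s p_s ∂V^s/∂p_i. -/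
def Wp (V : Fam n) (i : Fin n) (q : Pt n) : ℝ :=
  ∑ s, q.2 s * pdv i (V s) q

/-- p-representation: Ω = Σ_s p_s W^s. -/
def Omga (V : Fam n) (q : Pt n) : ℝ := ∑ s, q.2 s * Wp V s q

/-- p-representation projector P̌^i_j = δ^i_j − W^i p_j / Ω. -/
def Pp (V : Fam n) (i j : Fin n) (q : Pt n) : ℝ :=
  kron i j - Wp V i q * q.2 j / Omga V q

/-- v-representation projector P^i_j = δ^i_j − L^i L_j / |L|². -/
def Pv (L : Fam n) (ginv : Fin n → Fin n → Pt n → ℝ) (i j : Fin n) (q : Pt n) : ℝ :=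
  kron i j - Lup L ginv i q * L j q / L2 L ginv q

/-- Scalar part of the v-representation horizontal covariant derivative:
    ∂f/∂x^m − Σ_{a,b} v^a Γ^b_{am} ∂f/∂v^b. -/
def vS (Γ : Conn n) (m : Fin n) (f : Pt n → ℝ) (q : Pt n) : ℝ :=
  pdx m f q - ∑ a, ∑ b, q.2 a * Γ b a m q * pdv b f q

/-- v-representation ∇_m X_j of a covector field. -/
def vCov (Γ : Conn n) (m : Fin n) (X : Fam n) (j : Fin n) (q : Pt n) : ℝ :=
  vS Γ m (X j) q - ∑ b, Γ b m j q * X b q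

/-- v-representation ∇_m X^i of a vector field. -/
def vVec (Γ : Conn n) (m : Fin n) (X : Fam n) (i : Fin n) (q : Pt n) : ℝ :=
  vS Γ m (X i) q + ∑ a, Γ i m a q * X a q

/-- v-representation ∇_k Y_{m r} of a (0,2) tensor field. -/
def vCov2 (Γ : Conn n) (k : Fin n) (Y : Fin n → Fin n → Pt n → ℝ)
    (m r : Fin n) (q : Pt n) : ℝ :=
  vS Γ k (Y m r) q - (∑ b, Γ b k m q * Y b r q) - (∑ b, Γ b k r q * Y m b q)

/-- v-representation ∇_m T^k_{ij} of a (1,2) tensor field. -/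
def vT12 (Γ : Conn n) (m : Fin n) (T : Conn n) (k i j : Fin n) (q : Pt n) : ℝ :=
  vS Γ m (T k i j) q + (∑ a, Γ k m a q * T a i j q)
    - (∑ b, Γ b m i q * T k b j q) - (∑ b, Γ b m j q * T k i b q)

/-- Connection components in p-representation: Γ^k_{ij} ∘ λ⁻¹. -/
def Gp (Γ : Conn n) (V : Fam n) (k i j : Fin n) (q : Pt n) : ℝ :=
  Γ k i j (lamInv V q)

/-- Scalar part of the p-representation horizontal covariant derivative:
    ∂f/∂x^m + Σ_{a,b} p_a Γ^a_{mb} ∂f/∂p_b. -/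
def pS (G : Conn n) (m : Fin n) (f : Pt n → ℝ) (q : Pt n) : ℝ :=
  pdx m f q + ∑ a, ∑ b, q.2 a * G a m b q * pdv b f q

/-- p-representation ∇_m X_j of a covector field. -/
def pCov (G : Conn n) (m : Fin n) (X : Fam n) (j : Fin n) (q : Pt n) : ℝ :=
  pS G m (X j) q - ∑ b, G b m j q * X b q

/-- p-representation ∇_m X^i of a vector field. -/
def pVec (G : Conn n) (m : Fin n) (X : Fam n) (i : Fin n) (q : Pt n) : ℝ :=
  pS G m (X i) q + ∑ a, G i m a q * X a q

/-- Force vector F^i = Φ^i + Σ_{j,k} Γ^i_{jk} v^j v^k. -/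
def Fvec (Γ : Conn n) (Φ : Fam n) (i : Fin n) (q : Pt n) : ℝ :=
  Φ i q + ∑ j, ∑ k, Γ i j k q * q.2 j * q.2 k

/-- Force covector F_q = Σ_i g_{qi} F^i. -/
def Fcov (L : Fam n) (Γ : Conn n) (Φ : Fam n) (i : Fin n) (q : Pt n) : ℝ :=
  ∑ j, gdn L i j q * Fvec Γ Φ j q

/-- p-representation force covector Q_i = Θ_i − Σ_{j,k} Γ^k_{ij} V^j p_k. -/
def Qp (Θ : Fam n) (Γ : Conn n) (V : Fam n) (i : Fin n) (q : Pt n) : ℝ :=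
  Θ i q - ∑ j, ∑ k, Gp Γ V k i j q * V j q * q.2 k

/-- p-representation covector Ǔ_i = Q_i + Σ_s (∇_i V^s) p_s. -/
def Ucheck (Θ : Fam n) (Γ : Conn n) (V : Fam n) (i : Fin n) (q : Pt n) : ℝ :=
  Qp Θ Γ V i q + ∑ s, pVec (Gp Γ V) i V s q * q.2 s

/-- v-representation covector U_i = Σ_q v^q ∇_q L_i − Σ_q L^q ∇_i L_q + F_i. -/
def Uv (L : Fam n) (ginv : Fin n → Fin n → Pt n → ℝ) (Γ : Conn n) (Φ : Fam n)
    (i : Fin n) (q : Pt n) : ℝ :=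
  (∑ j, q.2 j * vCov Γ j L i q) - (∑ j, Lup L ginv j q * vCov Γ i L j q) + Fcov L Γ Φ i q

/-- v-representation dynamic curvature tensor D^k_{rij} = −∂Γ^k_{ir}/∂v^j. -/
def Dv (Γ : Conn n) (k r i j : Fin n) (q : Pt n) : ℝ := -(pdv j (Γ k i r) q)

/-- v-representation curvature tensor R^k_{rij}. -/
def Rv (Γ : Conn n) (k r i j : Fin n) (q : Pt n) : ℝ :=
  pdx i (Γ k j r) q - pdx j (Γ k i r) q
  + (∑ m, (Γ k i m q * Γ m j r q - Γ k j m q * Γ m i r q))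
  - (∑ m, ∑ s, q.2 s * Γ m i s q * pdv m (Γ k j r) q)
  + (∑ m, ∑ s, q.2 s * Γ m j s q * pdv m (Γ k i r) q)

/-- p-representation dynamic curvature tensor Ď^{kr}_{ij} = −∂Γ^k_{ij}/∂p_r. -/
def Dp (G : Conn n) (k r i j : Fin n) (q : Pt n) : ℝ := -(pdv r (G k i j) q)

/-- p-representation curvature tensor Ř^k_{rij}. -/
def Rp (G : Conn n) (k r i j : Fin n) (q : Pt n) : ℝ :=
  pdx i (G k j r) q - pdx j (G k i r) q
  + (∑ m, (G k i m q * G m j r q - G k j m q * G m i r q))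
  + (∑ m, ∑ s, q.2 s * G s m i q * pdv m (G k j r) q)
  - (∑ m, ∑ s, q.2 s * G s m j q * pdv m (G k i r) q)

/-- p-representation vector field α̌^k. -/
def alphaCheck (Θ : Fam n) (Γ : Conn n) (V : Fam n) (k : Fin n) (q : Pt n) : ℝ :=
  (∑ r, pdv k (V r) q * Ucheck Θ Γ V r q)
  + (∑ r, pVec (Gp Γ V) r (Wp V) k q * V r q)
  + (∑ r, pdv r (Wp V k) q * Qp Θ Γ V r q)
  + (∑ r, Wp V r q * pdv k (Qp Θ Γ V r) q)
  - (∑ r, ∑ s, ∑ j, q.2 s * Dp (Gp Γ V) s k r j q * Wp V r q * V j q)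

/-- v-representation vector field α^k. -/
def alphaV (L : Fam n) (ginv : Fin n → Fin n → Pt n → ℝ) (Γ : Conn n) (Φ : Fam n)
    (k : Fin n) (q : Pt n) : ℝ :=
  (∑ r, ginv r k q * Uv L ginv Γ Φ r q)
  + (∑ r, q.2 r * vVec Γ r (Lup L ginv) k q)
  + (∑ j, Fvec Γ Φ j q * pdv j (Lup L ginv k) q)
  + (∑ j, ∑ r, ∑ s, Lup L ginv r q * ginv j k q * q.2 s * pdv j (vCov Γ s L r) q)
  + (∑ j, ∑ r, Lup L ginv r q * ginv j k q * pdv j (Fcov L Γ Φ r) q)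
  + (∑ j, ∑ r, Lup L ginv r q * ginv j k q * vCov Γ j L r q)
  - (∑ j, ∑ m, ∑ r, ∑ s, ginv m k q * L s q * Dv Γ s r j m q * Lup L ginv r q * q.2 j)

/-- p-representation covector field β̌_k. -/
def betaCheck (Θ : Fam n) (Γ : Conn n) (V : Fam n) (k : Fin n) (q : Pt n) : ℝ :=
  (∑ r, pCov (Gp Γ V) r (Ucheck Θ Γ V) k q * V r q)
  + (∑ r, pdv r (Ucheck Θ Γ V k) q * Qp Θ Γ V r q)
  + (∑ r, pVec (Gp Γ V) k V r q * Ucheck Θ Γ V r q)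
  + (∑ r, pCov (Gp Γ V) k (Qp Θ Γ V) r q * Wp V r q)
  - (∑ r, ∑ s, ∑ m, (Rp (Gp Γ V) s r m k q * V m q
      - Dp (Gp Γ V) s m r k q * Qp Θ Γ V m q) * Wp V r q * q.2 s)

/-- v-representation covector field β_k. -/
def betaV (L : Fam n) (ginv : Fin n → Fin n → Pt n → ℝ) (Γ : Conn n) (Φ : Fam n)
    (k : Fin n) (q : Pt n) : ℝ :=
  (∑ r, q.2 r * vCov Γ r (Uv L ginv Γ Φ) k q)
  + (∑ j, Fvec Γ Φ j q * pdv j (Uv L ginv Γ Φ k) q)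
  - (∑ j, ∑ r, ∑ s, vCov Γ k L j q * ginv r j q * q.2 s * vCov Γ s L r q)
  - (∑ j, ∑ r, vCov Γ k L j q * ginv r j q * Fcov L Γ Φ r q)
  + (∑ r, Lup L ginv r q * vCov Γ k (Fcov L Γ Φ) r q)
  + (∑ m, ∑ r, Lup L ginv r q * q.2 m * vCov2 Γ k (fun m' r' => vCov Γ m' L r') m r q)
  - (∑ j, ∑ r, ∑ s, Lup L ginv r q * vCov Γ k L j q * ginv s j q * pdv s (Fcov L Γ Φ r) q)
  - (∑ j, ∑ m, ∑ r, ∑ s, Lup L ginv r q * vCov Γ k L j q * ginv s j q * q.2 m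
      * pdv s (vCov Γ m L r) q)
  - (∑ r, ∑ s, ∑ m, Rv Γ s r m k q * q.2 m * Lup L ginv r q * L s q)
  + (∑ j, ∑ r, ∑ s, ∑ m, ∑ a, ginv a j q * vCov Γ k L j q * Dv Γ s m r a q * q.2 m
      * Lup L ginv r q * L s q)
  + (∑ r, ∑ s, ∑ m, ∑ a, ginv a m q * Dv Γ s r k a q * Fcov L Γ Φ m q
      * Lup L ginv r q * L s q)

/-- v-representation covector field η_k = β_k − Σ_s U_k α^s L_s / |L|². -/
def etaV (L : Fam n) (ginv : Fin n → Fin n → Pt n → ℝ) (Γ : Conn n) (Φ : Fam n)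
    (k : Fin n) (q : Pt n) : ℝ :=
  betaV L ginv Γ Φ k q
    - ∑ s, Uv L ginv Γ Φ k q * alphaV L ginv Γ Φ s q * L s q / L2 L ginv q

/-- p-representation tensor Ǎ^{rs} = ∂W^s/∂p_r. -/
def Acheck (V : Fam n) (r s : Fin n) (q : Pt n) : ℝ := pdv r (Wp V s) q

/-- v-representation tensor A^{rs} = Σ_q g^{qr} ∂L^s/∂v^q. -/
def Av (L : Fam n) (ginv : Fin n → Fin n → Pt n → ℝ) (r s : Fin n) (q : Pt n) : ℝ :=
  ∑ j, ginv j r q * pdv j (Lup L ginv s) q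

/-- p-representation tensor B̌^r_s. -/
def Bcheck (Θ : Fam n) (Γ : Conn n) (V : Fam n) (r s : Fin n) (q : Pt n) : ℝ :=
  pdv r (Ucheck Θ Γ V s) q
  + (∑ m, ∑ k, Wp V k q * q.2 m * Dp (Gp Γ V) m r k s q)
  - pVec (Gp Γ V) s (Wp V) r q
  + (∑ m, (pdv m (Wp V r) q - pdv r (Wp V m) q) * Ucheck Θ Γ V s q * q.2 m / Omga V q)

/-- v-representation tensor B^r_s. -/
def Bv (L : Fam n) (ginv : Fin n → Fin n → Pt n → ℝ) (Γ : Conn n) (Φ : Fam n)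
    (r s : Fin n) (q : Pt n) : ℝ :=
  (∑ j, ginv j r q * pdv j (Uv L ginv Γ Φ s) q)
  + (∑ m, ∑ k, ∑ j, ginv j r q * Lup L ginv k q * L m q * Dv Γ m k s j q)
  - vVec Γ s (Lup L ginv) r q
  + (∑ j, ∑ k, vCov Γ s L k q * ginv j k q * pdv j (Lup L ginv r) q)
  + (∑ j, ∑ m, (ginv j m q * pdv j (Lup L ginv r) q - ginv j r q * pdv j (Lup L ginv m) q)
      * Uv L ginv Γ Φ s q * L m q / L2 L ginv q)

/-- p-representation tensor Č_{rs}. -/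
def Ccheck (Θ : Fam n) (Γ : Conn n) (V : Fam n) (r s : Fin n) (q : Pt n) : ℝ :=
  pCov (Gp Γ V) r (Ucheck Θ Γ V) s q
  - (∑ m, (Ucheck Θ Γ V r q * pdv m (Ucheck Θ Γ V s) q
      + Ucheck Θ Γ V s q * pVec (Gp Γ V) r (Wp V) m q) * q.2 m / Omga V q)
  - (∑ k, ∑ j, ((∑ m, Dp (Gp Γ V) m j k s q * Ucheck Θ Γ V r q * q.2 m / Omga V q)
      + Rp (Gp Γ V) j k r s q / 2) * Wp V k q * q.2 j)

/-- v-representation tensor C_{rs}. -/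
def Cv (L : Fam n) (ginv : Fin n → Fin n → Pt n → ℝ) (Γ : Conn n) (Φ : Fam n)
    (r s : Fin n) (q : Pt n) : ℝ :=
  vCov Γ r (Uv L ginv Γ Φ) s q
  - (∑ j, ∑ k, vCov Γ r L j q * ginv k j q * pdv k (Uv L ginv Γ Φ s) q)
  - (∑ m, Uv L ginv Γ Φ s q * vVec Γ r (Lup L ginv) m q * L m q / L2 L ginv q)
  - (∑ j, ∑ m, Uv L ginv Γ Φ r q * ginv j m q * pdv j (Uv L ginv Γ Φ s) q * L m q
      / L2 L ginv q)
  + (∑ m, ∑ j, ∑ k, Uv L ginv Γ Φ s q * vCov Γ r L k q * ginv j k q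
      * pdv j (Lup L ginv m) q * L m q / L2 L ginv q)
  - (∑ k, ∑ j, ∑ m, ∑ a, ginv a j q * Dv Γ m k s a q * Uv L ginv Γ Φ r q * L m q
      * Lup L ginv k q * L j q / L2 L ginv q)
  - (∑ k, ∑ j, (Rv Γ j k r s q / 2) * Lup L ginv k q * L j q)
  - (∑ k, ∑ j, ∑ m, ∑ a, vCov Γ r L m q * Dv Γ j k s a q * ginv a m q
      * Lup L ginv k q * L j q)

/-- Gauge-transformed connection Γ' = Γ + T. -/
def addT (Γ T : Conn n) : Conn n := fun k i j q => Γ k i j q + T k i j q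

/-- The quantity Ξ_{rs} appearing in the gauge transformation rule for C. -/
def XiG (L : Fam n) (ginv : Fin n → Fin n → Pt n → ℝ) (Γ : Conn n) (Φ : Fam n)
    (T : Conn n) (r s : Fin n) (q : Pt n) : ℝ :=
  (∑ j, ∑ b, ∑ m, T b r j q * L b q * Pv L ginv j m q * Bv L ginv Γ Φ m s q)
  + (∑ j, ∑ b, ∑ m, ∑ a, ∑ c, ∑ e, T b r j q * L b q * Pv L ginv j m q
      * Av L ginv m a q * Pv L ginv c a q * T e s c q * L e q)

end


noncomputable section AuxProof
variable {n : ℕ}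

lemma diff_lamInv (V : Fam n) (hV : ∀ i, ContDiff ℝ (⊤:ℕ∞) (V i)) :
    Differentiable ℝ (lamInv V) :=
  ((contDiff_fst.prodMk (contDiff_pi.2 fun i => hV i)) : ContDiff ℝ (⊤:ℕ∞) (lamInv V)).differentiable (by simp)

lemma hasFDerivAt_lam (L : Fam n) (hL : ∀ i, ContDiff ℝ (⊤:ℕ∞) (L i)) (q : Pt n) :
    HasFDerivAt (lam L)
      ((ContinuousLinearMap.fst ℝ (Fin n → ℝ) (Fin n → ℝ)).prod
        (ContinuousLinearMap.pi fun s => fderiv ℝ (L s) q)) q :=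
  (hasFDerivAt_fst).prodMk (hasFDerivAt_pi.2 fun s => (((hL s).differentiable (by simp)) q).hasFDerivAt)

lemma chain_val (L V : Fam n) (hL : ∀ i, ContDiff ℝ (⊤:ℕ∞) (L i))
    (hV : ∀ i, ContDiff ℝ (⊤:ℕ∞) (V i))
    (hLeft : ∀ q : Pt n, lamInv V (lam L q) = q)
    (F : Pt n → ℝ) (hF : Differentiable ℝ F) (q w : Pt n) :
    fderiv ℝ (fun p => F (lamInv V p)) (lam L q) (w.1, fun s => fderiv ℝ (L s) q w)
      = fderiv ℝ F q w := by
  have hG : Differentiable ℝ (fun p => F (lamInv V p)) := hF.comp (diff_lamInv V hV)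
  have hlam := hasFDerivAt_lam L hL q
  have hcomp := (hG (lam L q)).hasFDerivAt.comp q hlam
  have hEq : (fun x => F (lamInv V (lam L x))) = F := by funext x; rw [hLeft]
  rw [show ((fun p => F (lamInv V p)) ∘ lam L) = F from hEq] at hcomp
  rw [hcomp.fderiv]
  rfl

lemma fderiv_eval (F : Pt n → ℝ) (q : Pt n) (hF : DifferentiableAt ℝ F q) (ξ η : Fin n → ℝ) :
    fderiv ℝ F q (ξ, η) = (∑ i, ξ i * pdx i F q) + ∑ b, η b * pdv b F q := by
  have h1 : ((ξ, η) : Pt n)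
      = ∑ i, (ξ i • ((Pi.single i 1, 0) : Pt n) + η i • ((0, Pi.single i 1) : Pt n)) := by
    ext x
    · simp [Prod.fst_sum, Pi.single_apply, Finset.sum_ite_eq']
    · simp [Prod.snd_sum, Pi.single_apply, Finset.sum_ite_eq']
  rw [h1, map_sum]
  simp only [map_add, map_smul, smul_eq_mul]
  rw [Finset.sum_add_distrib]
  rfl

lemma ginv_right (L : Fam n) (ginv : Fin n → Fin n → Pt n → ℝ) (q : Pt n)
    (hginv : ∀ (s k : Fin n), (∑ r, ginv s r q * gdn L r k q) = kron s k)
    (a s : Fin n) : (∑ m, gdn L a m q * ginv m s q) = kron a s := by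
  have hM : (Matrix.of fun s r => ginv s r q) * (Matrix.of fun r k => gdn L r k q) = 1 := by
    ext s k
    simpa [Matrix.mul_apply, Matrix.one_apply, kron] using hginv s k
  have h2 := mul_eq_one_comm.mp hM
  have h3 := congrFun (congrFun h2 a) s
  simpa [Matrix.mul_apply, Matrix.one_apply, kron] using h3

section GpDeriv
variable (L V : Fam n) (ginv : Fin n → Fin n → Pt n → ℝ)
  (hL : ∀ i, ContDiff ℝ (⊤:ℕ∞) (L i)) (hV : ∀ i, ContDiff ℝ (⊤:ℕ∞) (V i))
  (hLeft : ∀ q : Pt n, lamInv V (lam L q) = q)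
  (hginv : ∀ (q : Pt n) (s k : Fin n), (∑ r, ginv s r q * gdn L r k q) = kron s k)
  (Γ : Conn n) (hΓ : ∀ k i j, ContDiff ℝ (⊤:ℕ∞) (Γ k i j))

include hL hV hLeft hginv hΓ in
lemma pdv_Gp (q : Pt n) (k i j m : Fin n) :
    pdv m (Gp Γ V k i j) (lam L q) = ∑ b, ginv b m q * pdv b (Γ k i j) q := by
  have key := chain_val L V hL hV hLeft (Γ k i j)
    ((hΓ k i j).differentiable (by simp)) q (0, fun b => ginv b m q)
  have hw : (fun s => fderiv ℝ (L s) q ((0, fun b => ginv b m q) : Pt n)) = Pi.single m 1 := by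
    funext s
    rw [fderiv_eval (L s) q (((hL s).differentiable (by simp)) q)]
    have := ginv_right L ginv q (hginv q) s m
    simp only [Pi.zero_apply, zero_mul, Finset.sum_const_zero, zero_add]
    rw [show (∑ b, ginv b m q * pdv b (L s) q) = ∑ b, gdn L s b q * ginv b m q from
      Finset.sum_congr rfl fun b _ => by rw [gdn]; ring]
    rw [this]
    simp [kron, Pi.single_apply, eq_comm]
  rw [show ((0, fun b => ginv b m q) : Pt n).1 = 0 from rfl, hw] at key
  have key2 : pdv m (Gp Γ V k i j) (lam L q) = (fderiv ℝ (Γ k i j) q) (0, fun b => ginv b m q) := key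
  rw [key2, fderiv_eval (Γ k i j) q (((hΓ k i j).differentiable (by simp)) q)]
  simp [pdv]

include hL hV hLeft hginv hΓ in
lemma pdx_Gp (q : Pt n) (k i j m : Fin n) :
    pdx m (Gp Γ V k i j) (lam L q)
      = pdx m (Γ k i j) q
        - ∑ a, ∑ b, ginv b a q * pdx m (L a) q * pdv b (Γ k i j) q := by
  set η : Fin n → ℝ := fun b => -∑ a, ginv b a q * pdx m (L a) q with hη
  have key := chain_val L V hL hV hLeft (Γ k i j)
    ((hΓ k i j).differentiable (by simp)) q (Pi.single m 1, η)
  have hw : (fun s => fderiv ℝ (L s) q ((Pi.single m 1, η) : Pt n)) = 0 := by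
    funext s
    rw [fderiv_eval (L s) q (((hL s).differentiable (by simp)) q)]
    have h1 : (∑ i, (Pi.single m 1 : Fin n → ℝ) i * pdx i (L s) q) = pdx m (L s) q := by
      simp [Pi.single_apply, Finset.sum_ite_eq']
    have h2 : (∑ b, η b * pdv b (L s) q) = - pdx m (L s) q := by
      simp only [hη, neg_mul]
      rw [Finset.sum_neg_distrib, neg_inj]
      rw [show (∑ b, (∑ a, ginv b a q * pdx m (L a) q) * pdv b (L s) q)
          = ∑ a, (∑ b, gdn L s b q * ginv b a q) * pdx m (L a) q from ?_]
      · rw [show (∑ a, (∑ b, gdn L s b q * ginv b a q) * pdx m (L a) q)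
            = ∑ a, kron s a * pdx m (L a) q from
          Finset.sum_congr rfl fun a _ => by rw [ginv_right L ginv q (hginv q) s a]]
        simp [kron, Finset.sum_ite_eq']
      · calc (∑ b, (∑ a, ginv b a q * pdx m (L a) q) * pdv b (L s) q)
            = ∑ b, ∑ a, gdn L s b q * ginv b a q * pdx m (L a) q := by
              refine Finset.sum_congr rfl fun b _ => ?_
              rw [Finset.sum_mul _ _ _]
              exact Finset.sum_congr rfl fun a _ => by rw [gdn]; ring
          _ = ∑ a, ∑ b, gdn L s b q * ginv b a q * pdx m (L a) q := Finset.sum_comm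
          _ = ∑ a, (∑ b, gdn L s b q * ginv b a q) * pdx m (L a) q :=
              Finset.sum_congr rfl fun a _ => (Finset.sum_mul _ _ _).symm
    rw [h1, h2]; simp
  rw [show ((Pi.single m 1, η) : Pt n).1 = Pi.single m 1 from rfl, hw] at key
  have key2 : pdx m (Gp Γ V k i j) (lam L q) = (fderiv ℝ (Γ k i j) q) (Pi.single m 1, η) := key
  rw [key2, fderiv_eval (Γ k i j) q (((hΓ k i j).differentiable (by simp)) q)]
  have h1 : (∑ i', (Pi.single m 1 : Fin n → ℝ) i' * pdx i' (Γ k i j) q) = pdx m (Γ k i j) q := by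
    simp [Pi.single_apply, Finset.sum_ite_eq']
  have h2 : (∑ b, η b * pdv b (Γ k i j) q)
      = -∑ a, ∑ b, ginv b a q * pdx m (L a) q * pdv b (Γ k i j) q := by
    calc (∑ b, η b * pdv b (Γ k i j) q)
        = ∑ b, -∑ a, ginv b a q * pdx m (L a) q * pdv b (Γ k i j) q := by
          refine Finset.sum_congr rfl fun b _ => ?_
          rw [hη, neg_mul, Finset.sum_mul]
      _ = -(∑ b, ∑ a, ginv b a q * pdx m (L a) q * pdv b (Γ k i j) q) := by
          rw [Finset.sum_neg_distrib]
      _ = -∑ a, ∑ b, ginv b a q * pdx m (L a) q * pdv b (Γ k i j) q := by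
          rw [Finset.sum_comm]
  rw [h1, h2]
  ring


end GpDeriv

section Expand
variable (L : Fam n) (ginv : Fin n → Fin n → Pt n → ℝ) (Γ : Conn n)

lemma sum_swap4 (f : Fin n → Fin n → Fin n → Fin n → ℝ) :
    (∑ a, ∑ s, ∑ c, ∑ b, f a s c b) = ∑ c, ∑ b, ∑ s, ∑ a, f a s c b :=
  calc (∑ a, ∑ s, ∑ c, ∑ b, f a s c b)
      = ∑ a, ∑ c, ∑ s, ∑ b, f a s c b :=
        Finset.sum_congr rfl fun a _ => Finset.sum_comm
    _ = ∑ c, ∑ a, ∑ s, ∑ b, f a s c b := Finset.sum_comm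
    _ = ∑ c, ∑ a, ∑ b, ∑ s, f a s c b :=
        Finset.sum_congr rfl fun c _ => Finset.sum_congr rfl fun a _ => Finset.sum_comm
    _ = ∑ c, ∑ b, ∑ a, ∑ s, f a s c b :=
        Finset.sum_congr rfl fun c _ => Finset.sum_comm
    _ = ∑ c, ∑ b, ∑ s, ∑ a, f a s c b :=
        Finset.sum_congr rfl fun c _ => Finset.sum_congr rfl fun b _ => Finset.sum_comm

lemma expand_lemma
    (q : Pt n)
    (hginv : ∀ (s k : Fin n), (∑ r, ginv s r q * gdn L r k q) = kron s k)
    (hΓsym : ∀ (k i j : Fin n) (q : Pt n), Γ k i j q = Γ k j i q)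
    (i0 : Fin n) (d : Fin n → ℝ) :
    (∑ a, ∑ s, vCov Γ i0 L a q * ginv s a q * -(d s))
      = -(∑ a, ∑ s, pdx i0 (L a) q * ginv s a q * d s)
        + (∑ m, ∑ s, q.2 s * Γ m i0 s q * d m)
        + (∑ a, ∑ s, ∑ b, Γ b i0 a q * L b q * ginv s a q * d s) := by
  have hpt : ∀ a s : Fin n, vCov Γ i0 L a q * ginv s a q * -(d s)
      = -(pdx i0 (L a) q * ginv s a q * d s)
        + (∑ c, ∑ b, q.2 c * Γ b c i0 q * pdv b (L a) q) * (ginv s a q * d s)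
        + ∑ b, Γ b i0 a q * L b q * ginv s a q * d s := by
    intro a s
    rw [show (∑ b, Γ b i0 a q * L b q * ginv s a q * d s)
        = (∑ b, Γ b i0 a q * L b q) * (ginv s a q * d s) from by
      rw [Finset.sum_mul _ _ _]
      exact Finset.sum_congr rfl fun b _ => by ring]
    simp only [vCov, vS]
    ring
  calc (∑ a, ∑ s, vCov Γ i0 L a q * ginv s a q * -(d s))
      = (∑ a, ∑ s, (-(pdx i0 (L a) q * ginv s a q * d s)
          + (∑ c, ∑ b, q.2 c * Γ b c i0 q * pdv b (L a) q) * (ginv s a q * d s)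
          + ∑ b, Γ b i0 a q * L b q * ginv s a q * d s)) := by
        exact Finset.sum_congr rfl fun a _ => Finset.sum_congr rfl fun s _ => hpt a s
    _ = -(∑ a, ∑ s, pdx i0 (L a) q * ginv s a q * d s)
        + (∑ a, ∑ s, (∑ c, ∑ b, q.2 c * Γ b c i0 q * pdv b (L a) q) * (ginv s a q * d s))
        + (∑ a, ∑ s, ∑ b, Γ b i0 a q * L b q * ginv s a q * d s) := by
        simp only [Finset.sum_add_distrib, Finset.sum_neg_distrib]
    _ = -(∑ a, ∑ s, pdx i0 (L a) q * ginv s a q * d s)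
        + (∑ m, ∑ s, q.2 s * Γ m i0 s q * d m)
        + (∑ a, ∑ s, ∑ b, Γ b i0 a q * L b q * ginv s a q * d s) := by
        congr 1
        congr 1
        -- contraction of the middle term
        calc (∑ a, ∑ s, (∑ c, ∑ b, q.2 c * Γ b c i0 q * pdv b (L a) q) * (ginv s a q * d s))
            = ∑ a, ∑ s, ∑ c, ∑ b, (q.2 c * Γ b c i0 q)
                * (ginv s a q * gdn L a b q * d s) := by
              refine Finset.sum_congr rfl fun a _ => Finset.sum_congr rfl fun s _ => ?_
              rw [Finset.sum_mul _ _ _]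
              refine Finset.sum_congr rfl fun c _ => ?_
              rw [Finset.sum_mul _ _ _]
              refine Finset.sum_congr rfl fun b _ => ?_
              simp only [gdn]; ring
          _ = ∑ c, ∑ b, ∑ s, ∑ a, (q.2 c * Γ b c i0 q)
                * (ginv s a q * gdn L a b q * d s) := by
              exact sum_swap4 _
          _ = ∑ c, ∑ b, (q.2 c * Γ b c i0 q) * d b := by
              refine Finset.sum_congr rfl fun c _ => Finset.sum_congr rfl fun b _ => ?_
              calc (∑ s, ∑ a, (q.2 c * Γ b c i0 q) * (ginv s a q * gdn L a b q * d s))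
                  = ∑ s, (q.2 c * Γ b c i0 q)
                      * ((∑ a, ginv s a q * gdn L a b q) * d s) := by
                    refine Finset.sum_congr rfl fun s _ => ?_
                    rw [Finset.sum_mul _ _ _, Finset.mul_sum]
                _ = ∑ s, (q.2 c * Γ b c i0 q) * (kron s b * d s) := by
                    refine Finset.sum_congr rfl fun s _ => by rw [hginv s b]
                _ = (q.2 c * Γ b c i0 q) * d b := by
                    simp [kron, Finset.sum_ite_eq']
          _ = ∑ m, ∑ s, q.2 s * Γ m i0 s q * d m := by
              rw [Finset.sum_comm]
              refine Finset.sum_congr rfl fun m _ => Finset.sum_congr rfl fun s _ => ?_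
              rw [hΓsym m s i0 q]

end Expand
end AuxProof

theorem stmt5
    (n : ℕ) (hn : 2 ≤ n)
    (L V : Fam n) (ginv : Fin n → Fin n → Pt n → ℝ)
    (hL : ∀ i, ContDiff ℝ (⊤ : ℕ∞) (L i))
    (hV : ∀ i, ContDiff ℝ (⊤ : ℕ∞) (V i))
    (hginvSm : ∀ i j, ContDiff ℝ (⊤ : ℕ∞) (ginv i j))
    (hLeft : ∀ q : Pt n, lamInv V (lam L q) = q)
    (hRight : ∀ q : Pt n, lam L (lamInv V q) = q)
    (hginv : ∀ (q : Pt n) (s k : Fin n), (∑ r, ginv s r q * gdn L r k q) = kron s k)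
    (Γ : Conn n)
    (hΓ : ∀ k i j, ContDiff ℝ (⊤ : ℕ∞) (Γ k i j))
    (hΓsym : ∀ (k i j : Fin n) (q : Pt n), Γ k i j q = Γ k j i q) :
    ∀ (q : Pt n) (k r i j : Fin n),
      Rp (Gp Γ V) k r i j (lam L q)
        = Rv Γ k r i j q
          + (∑ a, ∑ s, vCov Γ i L a q * ginv s a q * Dv Γ k j r s q)
          - (∑ a, ∑ s, vCov Γ j L a q * ginv s a q * Dv Γ k i r s q) := by
  intro q k r i j
  have hDp := pdv_Gp L V ginv hL hV hLeft hginv Γ hΓ q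
  have hDx := pdx_Gp L V ginv hL hV hLeft hginv Γ hΓ q
  have hGval : ∀ a b c : Fin n, Gp Γ V a b c (lam L q) = Γ a b c q := fun a b c => by
    rw [Gp, hLeft]
  have hΓf : ∀ a b c : Fin n, Γ a b c = Γ a c b := fun a b c =>
    funext fun x => hΓsym a b c x
  have hD1 : ∀ s, Dv Γ k j r s q = -(pdv s (Γ k j r) q) := fun s => by
    show -(pdv s (Γ k r j) q) = -(pdv s (Γ k j r) q)
    rw [hΓf k r j]
  have hD2 : ∀ s, Dv Γ k i r s q = -(pdv s (Γ k i r) q) := fun s => by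
    show -(pdv s (Γ k r i) q) = -(pdv s (Γ k i r) q)
    rw [hΓf k r i]
  have hE1 := expand_lemma L ginv Γ q (hginv q) hΓsym i (fun s => pdv s (Γ k j r) q)
  have hE2 := expand_lemma L ginv Γ q (hginv q) hΓsym j (fun s => pdv s (Γ k i r) q)
  have hR1 : (∑ a, ∑ s, vCov Γ i L a q * ginv s a q * Dv Γ k j r s q)
      = -(∑ a, ∑ s, pdx i (L a) q * ginv s a q * pdv s (Γ k j r) q)
        + (∑ m, ∑ s, q.2 s * Γ m i s q * pdv m (Γ k j r) q)
        + (∑ a, ∑ s, ∑ b, Γ b i a q * L b q * ginv s a q * pdv s (Γ k j r) q) := by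
    rw [show (∑ a, ∑ s, vCov Γ i L a q * ginv s a q * Dv Γ k j r s q)
        = (∑ a, ∑ s, vCov Γ i L a q * ginv s a q * -(pdv s (Γ k j r) q)) from
      Finset.sum_congr rfl fun a _ => Finset.sum_congr rfl fun s _ => by rw [hD1 s]]
    exact hE1
  have hR2 : (∑ a, ∑ s, vCov Γ j L a q * ginv s a q * Dv Γ k i r s q)
      = -(∑ a, ∑ s, pdx j (L a) q * ginv s a q * pdv s (Γ k i r) q)
        + (∑ m, ∑ s, q.2 s * Γ m j s q * pdv m (Γ k i r) q)
        + (∑ a, ∑ s, ∑ b, Γ b j a q * L b q * ginv s a q * pdv s (Γ k i r) q) := by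
    rw [show (∑ a, ∑ s, vCov Γ j L a q * ginv s a q * Dv Γ k i r s q)
        = (∑ a, ∑ s, vCov Γ j L a q * ginv s a q * -(pdv s (Γ k i r) q)) from
      Finset.sum_congr rfl fun a _ => Finset.sum_congr rfl fun s _ => by rw [hD2 s]]
    exact hE2
  rw [hR1, hR2]
  simp only [Rp, Rv]
  rw [hDx k j r i, hDx k i r j]
  simp only [hDp, hGval]
  simp only [show (lam L q).2 = fun s => L s q from rfl]
  -- remaining algebra
  have hA1 : (∑ a, ∑ b, ginv b a q * pdx i (L a) q * pdv b (Γ k j r) q)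
      = ∑ a, ∑ s, pdx i (L a) q * ginv s a q * pdv s (Γ k j r) q :=
    Finset.sum_congr rfl fun a _ => Finset.sum_congr rfl fun s _ => by ring
  have hA2 : (∑ a, ∑ b, ginv b a q * pdx j (L a) q * pdv b (Γ k i r) q)
      = ∑ a, ∑ s, pdx j (L a) q * ginv s a q * pdv s (Γ k i r) q :=
    Finset.sum_congr rfl fun a _ => Finset.sum_congr rfl fun s _ => by ring
  have hC1 : (∑ m, ∑ s, L s q * Γ s m i q * ∑ b, ginv b m q * pdv b (Γ k j r) q)
      = ∑ a, ∑ s, ∑ b, Γ b i a q * L b q * ginv s a q * pdv s (Γ k j r) q := by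
    refine Finset.sum_congr rfl fun m _ => ?_
    rw [Finset.sum_comm]
    refine Finset.sum_congr rfl fun s _ => ?_
    rw [Finset.mul_sum]
    refine Finset.sum_congr rfl fun b _ => ?_
    rw [hΓsym s m i q]
    ring
  have hC2 : (∑ m, ∑ s, L s q * Γ s m j q * ∑ b, ginv b m q * pdv b (Γ k i r) q)
      = ∑ a, ∑ s, ∑ b, Γ b j a q * L b q * ginv s a q * pdv s (Γ k i r) q := by
    refine Finset.sum_congr rfl fun m _ => ?_
    rw [Finset.sum_comm]
    refine Finset.sum_congr rfl fun s _ => ?_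
    rw [Finset.mul_sum]
    refine Finset.sum_congr rfl fun b _ => ?_
    rw [hΓsym s m j q]
    ring
  linarith [hA1, hA2, hC1, hC2]
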